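/- Let P be a strongly nonatomic finitely additive probability on ({0,1}^∞, Σ) satisfying the Blackwell–Dubins property (equivalently, P is an extreme point of the set of extensions of its restriction to the cylinder algebra). Then for every ε > 0 there exists a finite partition {C_1, …, C_n} of Ω such that each C_i is a cylinder and P(C_i) ≤ ε for each i. -/

import Mathlib

open Filter Topology


/-- A path in `{0,1}^∞`. -/
abbrev BinSeq := ℕ → Bool

/-- The cylinder of length `t` with base `ω`: all sequences agreeing with `ω`
in the first `t` coordinates. -/
def cyl {X : Type*} (ω : ℕ → X) (t : ℕ) : Set (ℕ → X) := {ω' | ∀ i < t, ω' i = ω i}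

/-- An algebra of subsets of `Ω`. -/
structure SetAlgebra (Ω : Type*) where
  sets : Set (Set Ω)
  univ_mem : Set.univ ∈ sets
  compl_mem : ∀ S ∈ sets, Sᶜ ∈ sets
  union_mem : ∀ S ∈ sets, ∀ T ∈ sets, S ∪ T ∈ sets

/-- The algebra is a σ-algebra: closed under countable unions. -/
def SetAlgebra.IsSigmaAlgebra {Ω : Type*} (A : SetAlgebra Ω) : Prop :=
  ∀ f : ℕ → Set Ω, (∀ n, f n ∈ A.sets) → (⋃ n, f n) ∈ A.sets

/-- The power-set algebra. -/
def SetAlgebra.top (Ω : Type*) : SetAlgebra Ω :=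
  ⟨Set.univ, trivial, fun _ _ => trivial, fun _ _ _ _ => trivial⟩

/-- A finitely additive probability on `(Ω, A)`.  The function `m` is defined on all
subsets for convenience; only its values on `A.sets` are constrained. -/
structure FA {Ω : Type*} (A : SetAlgebra Ω) where
  m : Set Ω → ℝ
  nonneg : ∀ S ∈ A.sets, 0 ≤ m S
  total : m Set.univ = 1
  add : ∀ S ∈ A.sets, ∀ T ∈ A.sets, Disjoint S T → m (S ∪ T) = m S + m T

/-- Conditional probability `P(E | C) = P(E ∩ C) / P(C)`. -/
noncomputable def FA.cond {Ω : Type*} {A : SetAlgebra Ω} (P : FA A) (E C : Set Ω) : ℝ :=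
  P.m (E ∩ C) / P.m C

/-- `Q` is absolutely continuous w.r.t. `P` (written `Q ≪ P` in the paper):
for every sequence of events, `P(Eₙ) → 0` implies `Q(Eₙ) → 0`. -/
def AbsCont {Ω : Type*} {A : SetAlgebra Ω} (P Q : FA A) : Prop :=
  ∀ E : ℕ → Set Ω, (∀ n, E n ∈ A.sets) →
    Tendsto (fun n => P.m (E n)) atTop (𝓝 0) → Tendsto (fun n => Q.m (E n)) atTop (𝓝 0)

/-- `P` merges with `Q`: for every `ε > 0`, the `Q`-probability of the set of paths where
some event has conditional probabilities (given the first `t` coordinates) differing by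
more than `ε` tends to `0` as `t → ∞`.  (`sup_E |P(E|ωᵗ) - Q(E|ωᵗ)| > ε` is expressed
equivalently as `∃ E`.) -/
def Merges {A : SetAlgebra BinSeq} (P Q : FA A) : Prop :=
  ∀ ε > 0, Tendsto
    (fun t => Q.m {ω | ∃ E ∈ A.sets, ε < |P.cond E (cyl ω t) - Q.cond E (cyl ω t)|})
    atTop (𝓝 0)

/-- Membership in the algebra `F` generated by the cylinders of `{0,1}^∞`:
the finite unions of cylinders (the empty union giving `∅`). -/
def InCylAlg (S : Set BinSeq) : Prop :=
  ∃ (n : ℕ) (f : Fin n → BinSeq × ℕ), S = ⋃ i, cyl (f i).1 (f i).2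

/-- `Q` agrees with `P` on the algebra generated by cylinders, i.e. `Q` is an
extension of `P_F` from `F` to `Σ`. -/
def ExtAgree {A : SetAlgebra BinSeq} (P Q : FA A) : Prop :=
  ∀ S, InCylAlg S → Q.m S = P.m S

/-- `P` is an extreme point of the set `E(P_F, F, Σ)` of extensions of its restriction
to the cylinder algebra: any representation of `P` as a nontrivial convex combination
of two extensions forces the two extensions to coincide (with `P`). -/
def ExtremePoint {A : SetAlgebra BinSeq} (P : FA A) : Prop :=
  ∀ Q R : FA A, ExtAgree P Q → ExtAgree P R →
    ∀ α : ℝ, 0 < α → α < 1 →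
      (∀ S ∈ A.sets, P.m S = α * Q.m S + (1 - α) * R.m S) →
      ∀ S ∈ A.sets, Q.m S = R.m S

/-- `P` is strongly nonatomic (Savagean): every event can be split in any proportion. -/
def StronglyNonatomic {Ω : Type*} {A : SetAlgebra Ω} (P : FA A) : Prop :=
  ∀ E ∈ A.sets, ∀ α : ℝ, 0 ≤ α → α ≤ 1 → ∃ F ∈ A.sets, F ⊆ E ∧ P.m F = α * P.m E

/-- The Blackwell–Dubins property: `P` merges with every `Q ≪ P`. -/
def BDProp {A : SetAlgebra BinSeq} (P : FA A) : Prop :=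
  ∀ Q : FA A, AbsCont P Q → Merges P Q


/-! ### Auxiliary lemmas -/

section Aux

variable {Ω : Type*} {A : SetAlgebra Ω}

lemma SetAlgebra.empty_mem (A : SetAlgebra Ω) : (∅ : Set Ω) ∈ A.sets := by
  have := A.compl_mem _ A.univ_mem
  simpa using this

lemma SetAlgebra.inter_mem (A : SetAlgebra Ω) {S T : Set Ω} (hS : S ∈ A.sets)
    (hT : T ∈ A.sets) : S ∩ T ∈ A.sets := by
  have h := A.compl_mem _ (A.union_mem _ (A.compl_mem _ hS) _ (A.compl_mem _ hT))
  simpa [Set.compl_union] using h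

lemma SetAlgebra.diff_mem (A : SetAlgebra Ω) {S T : Set Ω} (hS : S ∈ A.sets)
    (hT : T ∈ A.sets) : S \ T ∈ A.sets := by
  have := A.inter_mem hS (A.compl_mem _ hT)
  simpa [Set.diff_eq] using this

lemma FA.empty_eq (P : FA A) : P.m ∅ = 0 := by
  have h := P.add ∅ A.empty_mem ∅ A.empty_mem (by simp)
  simp at h
  linarith

lemma FA.mono (P : FA A) {S T : Set Ω} (hS : S ∈ A.sets) (hT : T ∈ A.sets)
    (hST : S ⊆ T) : P.m S ≤ P.m T := by
  have h := P.add S hS (T \ S) (A.diff_mem hT hS) Set.disjoint_sdiff_right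
  rw [Set.union_diff_cancel hST] at h
  have := P.nonneg _ (A.diff_mem hT hS)
  linarith

lemma FA.diff_eq (P : FA A) {S T : Set Ω} (hS : S ∈ A.sets) (hT : T ∈ A.sets)
    (hST : S ⊆ T) : P.m (T \ S) = P.m T - P.m S := by
  have h := P.add S hS (T \ S) (A.diff_mem hT hS) Set.disjoint_sdiff_right
  rw [Set.union_diff_cancel hST] at h
  linarith

lemma FA.le_one (P : FA A) {S : Set Ω} (hS : S ∈ A.sets) : P.m S ≤ 1 := by
  have := P.mono hS A.univ_mem (Set.subset_univ S)
  rw [P.total] at this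
  exact this

end Aux

lemma cyl_antitone {X : Type*} (ω : ℕ → X) {s t : ℕ} (hst : s ≤ t) :
    cyl ω t ⊆ cyl ω s := fun x hx i hi => hx i (lt_of_lt_of_le hi hst)

lemma cyl_congr {X : Type*} {a b : ℕ → X} {t : ℕ} (h : ∀ i < t, a i = b i) :
    cyl a t = cyl b t := by
  ext x
  constructor <;> intro hx i hi
  · rw [hx i hi, h i hi]
  · rw [hx i hi, ← h i hi]

/-- Every `[0,1]`-valued sequence has a limit along an ultrafilter. -/
lemma exists_ulim (U : Ultrafilter ℕ) (f : ℕ → ℝ) (hf : ∀ n, f n ∈ Set.Icc (0:ℝ) 1) :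
    ∃ x, Tendsto f (U : Filter ℕ) (𝓝 x) := by
  have hle : (U.map f : Filter ℝ) ≤ 𝓟 (Set.Icc (0:ℝ) 1) := by
    rw [Filter.le_principal_iff]
    exact Filter.mem_map.mpr (Filter.univ_mem' hf)
  obtain ⟨a, _, ha⟩ := (isCompact_Icc (a := (0:ℝ)) (b := 1)).ultrafilter_le_nhds
    (U.map f) hle
  exact ⟨a, ha⟩

/-- Theorem 9: a strongly nonatomic `P` with the Blackwell–Dubins
property admits, for every `ε > 0`, a finite partition of `Ω` into cylinders each of
probability at most `ε`. -/
theorem partition_into_small_cylinders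
    (A : SetAlgebra BinSeq) (hσ : A.IsSigmaAlgebra)
    (hcyl : ∀ (ω : BinSeq) (t : ℕ), cyl ω t ∈ A.sets)
    (P : FA A) (hna : StronglyNonatomic P) (hbd : BDProp P)
    (ε : ℝ) (hε : 0 < ε) :
    ∃ (n : ℕ) (f : Fin n → BinSeq × ℕ),
      (⋃ i, cyl (f i).1 (f i).2) = Set.univ ∧
      (∀ i j, i ≠ j → Disjoint (cyl (f i).1 (f i).2) (cyl (f j).1 (f j).2)) ∧
      (∀ i, P.m (cyl (f i).1 (f i).2) ≤ ε) := by
  classical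
  -- It suffices to find a single length `t` such that every cylinder of length `t`
  -- has probability at most `ε`.
  suffices h : ∃ t, ∀ ω' : BinSeq, P.m (cyl ω' t) ≤ ε by
    obtain ⟨t, ht⟩ := h
    set e := Fintype.equivFin (Fin t → Bool) with he
    refine ⟨Fintype.card (Fin t → Bool),
      fun i => (fun k => if h : k < t then e.symm i ⟨k, h⟩ else false, t), ?_, ?_, ?_⟩
    · ext x
      simp only [Set.mem_iUnion, Set.mem_univ, iff_true]
      refine ⟨e (fun k => x k.val), ?_⟩
      intro i hi
      simp [cyl, hi]
    · intro i j hij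
      rw [Set.disjoint_left]
      intro x hxi hxj
      apply hij
      have hinj : e.symm i = e.symm j := by
        funext k
        have h1 := hxi k.val k.isLt
        have h2 := hxj k.val k.isLt
        simp only [k.isLt, dif_pos, Fin.eta] at h1 h2
        rw [← h1, h2]
      exact e.symm.injective hinj
    · intro i
      exact ht _
  by_contra hcon
  push_neg at hcon
  -- `hcon : ∀ t, ∃ ω', ε < P.m (cyl ω' t)`.  Extract a single heavy path `ω`.
  choose g hg using hcon
  obtain ⟨V, hV⟩ := Filter.exists_ultrafilter_le (atTop : Filter ℕ)
  have hVs : ∀ {S : Set ℕ}, S ∈ (atTop : Filter ℕ) → S ∈ (V : Filter ℕ) :=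
    fun hS => Filter.le_def.mp hV _ hS
  obtain ⟨ω, -, hconv⟩ := isCompact_univ.ultrafilter_le_nhds (V.map g)
    (by simp [Filter.le_principal_iff])
  have hconv' : Tendsto g (V : Filter ℕ) (𝓝 ω) := hconv
  have hcoord : ∀ i, {t | g t i = ω i} ∈ (V : Filter ℕ) := by
    intro i
    have h1 : Tendsto (fun t => g t i) (V : Filter ℕ) (𝓝 (ω i)) :=
      ((continuous_apply i).tendsto ω).comp hconv'
    have h2 : {b : Bool | b = ω i} ∈ 𝓝 (ω i) := by
      have : ({ω i} : Set Bool) ∈ 𝓝 (ω i) := (isOpen_discrete _).mem_nhds rfl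
      simpa only [Set.setOf_eq_eq_singleton] using this
    exact h1 h2
  have hC : ∀ s, ε ≤ P.m (cyl ω s) := by
    intro s
    have h1 : {t | ∀ i < s, g t i = ω i} ∈ (V : Filter ℕ) := by
      have heq : {t | ∀ i < s, g t i = ω i} = ⋂ i ∈ Finset.range s, {t | g t i = ω i} := by
        ext t; simp
      rw [heq]
      exact (Filter.biInter_finset_mem _).mpr fun i _ => hcoord i
    have h2 : Set.Ici s ∈ (V : Filter ℕ) := hVs (Filter.Ici_mem_atTop s)
    obtain ⟨t, ht1, ht2⟩ := Filter.nonempty_of_mem (Filter.inter_mem h1 h2)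
    calc ε ≤ P.m (cyl (g t) t) := (hg t).le
      _ ≤ P.m (cyl (g t) s) := P.mono (hcyl _ _) (hcyl _ _) (cyl_antitone _ ht2)
      _ = P.m (cyl ω s) := by rw [cyl_congr (fun i hi => ht1 i hi)]
  -- The measures of the cylinders along `ω` decrease to a limit `lam ≥ ε > 0`.
  set c : ℕ → ℝ := fun t => P.m (cyl ω t) with hc
  have hcanti : ∀ s t, s ≤ t → c t ≤ c s := fun s t hst =>
    P.mono (hcyl _ _) (hcyl _ _) (cyl_antitone _ hst)
  have hbddc : BddBelow (Set.range c) := ⟨ε, by rintro x ⟨t, rfl⟩; exact hC t⟩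
  set lam : ℝ := ⨅ t, c t with hlam
  have hlam_le : ∀ t, lam ≤ c t := fun t => ciInf_le hbddc t
  have hε_lam : ε ≤ lam := le_ciInf hC
  have hlam_pos : 0 < lam := lt_of_lt_of_le hε hε_lam
  obtain ⟨t0, ht0⟩ : ∃ t0, c t0 < lam * (9/8) := by
    apply exists_lt_of_ciInf_lt
    rw [← hlam]
    nlinarith
  -- Split `cyl ω t0` in half and intersect with the later cylinders.
  obtain ⟨F0, hF0A, hF0sub, hF0m⟩ :=
    hna (cyl ω t0) (hcyl ω t0) (1/2) (by norm_num) (by norm_num)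
  set F : ℕ → Set BinSeq := fun t => F0 ∩ cyl ω t with hF
  have hFA : ∀ t, F t ∈ A.sets := fun t => A.inter_mem hF0A (hcyl ω t)
  have hFnest : ∀ s t, t ≤ s → F s ⊆ F t := fun s t hts =>
    Set.inter_subset_inter_right _ (cyl_antitone _ hts)
  have hFsubcyl : ∀ s t, t ≤ s → F s ⊆ cyl ω t := fun s t hts =>
    Set.inter_subset_right.trans (cyl_antitone _ hts)
  set b : ℝ := lam - 1/2 * c t0 with hbdef
  have hbpos : 0 < b := by
    have := hlam_le t0
    rw [hbdef]; nlinarith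
  have hFlow : ∀ t, t0 ≤ t → b ≤ P.m (F t) := by
    intro t h
    have hsub : cyl ω t ⊆ cyl ω t0 := cyl_antitone _ h
    have hdisj : Disjoint (F t) (F0 \ cyl ω t) :=
      Set.disjoint_sdiff_right.mono_left Set.inter_subset_right
    have hunion : F t ∪ F0 \ cyl ω t = F0 := by
      rw [hF]; exact Set.inter_union_diff F0 (cyl ω t)
    have h1 : P.m F0 = P.m (F t) + P.m (F0 \ cyl ω t) := by
      have := P.add _ (hFA t) _ (A.diff_mem hF0A (hcyl ω t)) hdisj
      rw [hunion] at this
      exact this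
    have h2 : P.m (F0 \ cyl ω t) ≤ c t0 - c t := by
      have hmono : P.m (F0 \ cyl ω t) ≤ P.m (cyl ω t0 \ cyl ω t) :=
        P.mono (A.diff_mem hF0A (hcyl ω t)) (A.diff_mem (hcyl ω t0) (hcyl ω t))
          (Set.diff_subset_diff_left hF0sub)
      have hde : P.m (cyl ω t0 \ cyl ω t) = c t0 - c t :=
        P.diff_eq (hcyl ω t) (hcyl ω t0) hsub
      rw [hde] at hmono; exact hmono
    have h3 := hlam_le t
    rw [hbdef]
    linarith [hF0m]
  have hFup : ∀ t, P.m (F t) ≤ 1/2 * c t0 := by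
    intro t
    have := P.mono (hFA t) hF0A Set.inter_subset_left
    rw [hF0m] at this
    exact this
  -- Conditional measures given `F s`, clipped into `[0,1]`.
  set q : ℕ → Set BinSeq → ℝ := fun s E => min 1 (max 0 (P.m (E ∩ F s) / P.m (F s))) with hq
  have hq01 : ∀ s E, q s E ∈ Set.Icc (0:ℝ) 1 :=
    fun s E => ⟨le_min zero_le_one (le_max_left _ _), min_le_left _ _⟩
  have hqA : ∀ s, t0 ≤ s → ∀ E, E ∈ A.sets → q s E = P.m (E ∩ F s) / P.m (F s) := by
    intro s hs E hE
    have hpos : 0 < P.m (F s) := lt_of_lt_of_le hbpos (hFlow s hs)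
    have h0 : 0 ≤ P.m (E ∩ F s) := P.nonneg _ (A.inter_mem hE (hFA s))
    have h1 : P.m (E ∩ F s) ≤ P.m (F s) :=
      P.mono (A.inter_mem hE (hFA s)) (hFA s) Set.inter_subset_right
    rw [hq]
    simp only [max_eq_right (div_nonneg h0 hpos.le),
      min_eq_right ((div_le_one hpos).mpr h1)]
  -- The limit functional `L` along the ultrafilter `V`.
  have hLex : ∀ E : Set BinSeq, ∃ x, Tendsto (fun s => q s E) (V : Filter ℕ) (𝓝 x) :=
    fun E => exists_ulim V _ (fun s => hq01 s E)
  choose L hL using hLex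
  have hL0 : ∀ E, 0 ≤ L E := fun E =>
    ge_of_tendsto (hL E) (Filter.Eventually.of_forall fun s => (hq01 s E).1)
  have hL1 : ∀ E, L E ≤ 1 := fun E =>
    le_of_tendsto (hL E) (Filter.Eventually.of_forall fun s => (hq01 s E).2)
  have hLmono : ∀ E G, E ∈ A.sets → G ∈ A.sets → E ⊆ G → L E ≤ L G := by
    intro E G hE hG hEG
    refine le_of_tendsto_of_tendsto (hL E) (hL G) ?_
    filter_upwards [hVs (Filter.eventually_ge_atTop t0)] with s hs
    have hpos : 0 < P.m (F s) := lt_of_lt_of_le hbpos (hFlow s hs)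
    rw [hqA s hs E hE, hqA s hs G hG]
    gcongr
    exact P.mono (A.inter_mem hE (hFA s)) (A.inter_mem hG (hFA s))
      (Set.inter_subset_inter_left _ hEG)
  have hLadd : ∀ S T, S ∈ A.sets → T ∈ A.sets → Disjoint S T →
      L (S ∪ T) = L S + L T := by
    intro S T hS hT hd
    have h1 : Tendsto (fun s => q s S + q s T) (V : Filter ℕ) (𝓝 (L S + L T)) :=
      (hL S).add (hL T)
    refine tendsto_nhds_unique (hL (S ∪ T)) (h1.congr' ?_)
    filter_upwards [hVs (Filter.eventually_ge_atTop t0)] with s hs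
    rw [hqA s hs S hS, hqA s hs T hT, hqA s hs (S ∪ T) (A.union_mem S hS T hT)]
    rw [← add_div]
    congr 1
    rw [Set.union_inter_distrib_right]
    exact (P.add _ (A.inter_mem hS (hFA s)) _ (A.inter_mem hT (hFA s))
      (hd.mono Set.inter_subset_left Set.inter_subset_left)).symm
  have hLone : ∀ (G : Set BinSeq) (t : ℕ), G ∈ A.sets → (∀ s, t ≤ s → F s ⊆ G) →
      L G = 1 := by
    intro G t hG hFG
    refine tendsto_nhds_unique (hL G) (tendsto_const_nhds.congr' ?_)
    filter_upwards [hVs (Filter.eventually_ge_atTop (max t t0))] with s hs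
    have hs0 : t0 ≤ s := le_trans (le_max_right _ _) hs
    have hpos : 0 < P.m (F s) := lt_of_lt_of_le hbpos (hFlow s hs0)
    rw [hqA s hs0 G hG, Set.inter_eq_self_of_subset_right (hFG s (le_trans (le_max_left _ _) hs)),
      div_self (ne_of_gt hpos)]
  have hLuniv : L Set.univ = 1 :=
    hLone Set.univ 0 A.univ_mem (fun s _ => Set.subset_univ _)
  have hLF : ∀ t, L (F t) = 1 :=
    fun t => hLone (F t) t (hFA t) (fun s hs => hFnest s t hs)
  have hLC : ∀ t, L (cyl ω t) = 1 :=
    fun t => hLone (cyl ω t) t (hcyl ω t) (fun s hs => hFsubcyl s t hs)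
  -- The finitely additive probability `Q` (inner extension of `L` to all sets).
  set QS : Set BinSeq → Set ℝ := fun E => {x | ∃ G ∈ A.sets, G ⊆ E ∧ x = L G} with hQSdef
  have hQSne : ∀ E, (QS E).Nonempty := fun E => ⟨L ∅, ∅, A.empty_mem, Set.empty_subset E, rfl⟩
  have hQSbdd : ∀ E, BddAbove (QS E) := by
    intro E
    refine ⟨1, ?_⟩
    rintro x ⟨G, hG, -, rfl⟩
    exact hL1 G
  set Qm : Set BinSeq → ℝ := fun E => sSup (QS E) with hQmdef
  have hQm_eq : ∀ E, E ∈ A.sets → Qm E = L E := by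
    intro E hE
    apply le_antisymm
    · apply csSup_le (hQSne E)
      rintro x ⟨G, hG, hGE, rfl⟩
      exact hLmono G E hG hE hGE
    · exact le_csSup (hQSbdd E) ⟨E, hE, subset_rfl, rfl⟩
  have hQm_ge : ∀ E G, G ∈ A.sets → G ⊆ E → L G ≤ Qm E := fun E G hG hGE =>
    le_csSup (hQSbdd E) ⟨G, hG, hGE, rfl⟩
  set Q : FA A :=
    { m := Qm
      nonneg := fun S hS => by rw [hQm_eq S hS]; exact hL0 S
      total := by rw [hQm_eq _ A.univ_mem]; exact hLuniv
      add := fun S hS T hT hd => by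
        rw [hQm_eq _ (A.union_mem S hS T hT), hQm_eq _ hS, hQm_eq _ hT]
        exact hLadd S T hS hT hd } with hQdef
  -- `Q` is absolutely continuous with respect to `P`.
  have habs : AbsCont P Q := by
    intro E hEA hP0
    have hbound : ∀ n, Q.m (E n) ≤ P.m (E n) / b := by
      intro n
      show Qm (E n) ≤ _
      rw [hQm_eq _ (hEA n)]
      refine le_of_tendsto (hL (E n)) ?_
      filter_upwards [hVs (Filter.eventually_ge_atTop t0)] with s hs
      rw [hqA s hs _ (hEA n)]
      apply div_le_div₀ (P.nonneg _ (hEA n))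
        (P.mono (A.inter_mem (hEA n) (hFA s)) (hEA n) Set.inter_subset_left)
        hbpos (hFlow s hs)
    refine squeeze_zero (fun n => ?_) hbound (by simpa using hP0.div_const b)
    show (0:ℝ) ≤ Qm (E n)
    rw [hQm_eq _ (hEA n)]
    exact hL0 _
  -- But `P` does not merge with `Q`: contradiction with the Blackwell–Dubins property.
  have hM := hbd Q habs (1/4) (by norm_num)
  have hbad : ∀ t, t0 ≤ t → (1:ℝ) ≤
      Q.m {ω' | ∃ E ∈ A.sets, 1/4 < |P.cond E (cyl ω' t) - Q.cond E (cyl ω' t)|} := by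
    intro t ht
    have hsub : F t ⊆
        {ω' | ∃ E ∈ A.sets, 1/4 < |P.cond E (cyl ω' t) - Q.cond E (cyl ω' t)|} := by
      intro ω' hω'
      have hmemc : ω' ∈ cyl ω t := hω'.2
      have hceq : cyl ω' t = cyl ω t := cyl_congr (fun i hi => hmemc i hi)
      refine ⟨F0, hF0A, ?_⟩
      have hPc : P.cond F0 (cyl ω' t) = P.m (F t) / c t := by
        rw [FA.cond, hceq]
      have hQc : Q.cond F0 (cyl ω' t) = 1 := by
        rw [FA.cond, hceq]
        show Qm (F0 ∩ cyl ω t) / Qm (cyl ω t) = 1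
        have : F0 ∩ cyl ω t = F t := rfl
        rw [this, hQm_eq _ (hFA t), hQm_eq _ (hcyl ω t), hLF t, hLC t]
        norm_num
      rw [hPc, hQc]
      have hct_pos : 0 < c t := lt_of_lt_of_le hlam_pos (hlam_le t)
      have hr0 : 0 ≤ P.m (F t) / c t := div_nonneg (P.nonneg _ (hFA t)) hct_pos.le
      have hr : P.m (F t) / c t < 9/16 := by
        have h1 : P.m (F t) ≤ 1/2 * c t0 := hFup t
        have h2 : lam ≤ c t := hlam_le t
        rw [div_lt_iff₀ hct_pos]
        nlinarith
      rw [abs_sub_comm, abs_of_nonneg (by linarith)]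
      linarith
    calc (1:ℝ) = L (F t) := (hLF t).symm
      _ ≤ Qm _ := hQm_ge _ _ (hFA t) hsub
  obtain ⟨t, ht1, ht2⟩ :=
    ((hM.eventually_lt_const (by norm_num : (0:ℝ) < 1)).and
      (Filter.eventually_ge_atTop t0)).exists
  exact absurd (hbad t ht2) (not_le.mpr ht1)
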